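/- Suppose τ₀ and u₀ are related by -τ₀ = (1/(4u₀))[x u₀'/(u₀-1) - u₀]² + x²u₀/(u₀-1)², and -τ₀' = -x/(4u₀(u₀-1))·[u₀' - u₀(u₀-1)/x]² - xu₀/(u₀-1), and define τ₁ by -τ₁ = (1/(4u₀))[x u₀'/(u₀-1) - u₀]² - u₀ + x²u₀/(u₀-1)². Then τ₁(x) = 1 + τ₀(x) - x τ₀'(x)/τ₀(x). -/

import Mathlib

/-- If `-τ₀ = (1/(4u₀))[xu₀'/(u₀-1) - u₀]² + x²u₀/(u₀-1)²` and
`-τ₀' = -x/(4u₀(u₀-1))[u₀' - u₀(u₀-1)/x]² - xu₀/(u₀-1)`, and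
`-τ₁ = (1/(4u₀))[xu₀'/(u₀-1) - u₀]² - u₀ + x²u₀/(u₀-1)²`, then
`τ₁ = 1 + τ₀ - xτ₀'/τ₀`. -/
theorem stmt13 (u₀ τ₀ τ₁ : ℝ → ℝ)
    (hdiff : ∀ x ∈ Set.Ioi (0 : ℝ), DifferentiableAt ℝ u₀ x)
    (hu0 : ∀ x ∈ Set.Ioi (0 : ℝ), u₀ x ≠ 0)
    (hu1 : ∀ x ∈ Set.Ioi (0 : ℝ), u₀ x ≠ 1)
    (hτ0 : ∀ x ∈ Set.Ioi (0 : ℝ), τ₀ x ≠ 0)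
    (hrel0 : ∀ x ∈ Set.Ioi (0 : ℝ), -τ₀ x =
      (1 / (4 * u₀ x)) * (x * deriv u₀ x / (u₀ x - 1) - u₀ x) ^ 2 +
        x ^ 2 * u₀ x / (u₀ x - 1) ^ 2)
    (hrel0' : ∀ x ∈ Set.Ioi (0 : ℝ), HasDerivAt τ₀
      (-(-(x / (4 * u₀ x * (u₀ x - 1))) *
          (deriv u₀ x - u₀ x * (u₀ x - 1) / x) ^ 2 -
        x * u₀ x / (u₀ x - 1))) x)
    (hrel1 : ∀ x ∈ Set.Ioi (0 : ℝ), -τ₁ x =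
      (1 / (4 * u₀ x)) * (x * deriv u₀ x / (u₀ x - 1) - u₀ x) ^ 2 - u₀ x +
        x ^ 2 * u₀ x / (u₀ x - 1) ^ 2) :
    ∀ x ∈ Set.Ioi (0 : ℝ), τ₁ x = 1 + τ₀ x - x * deriv τ₀ x / τ₀ x := by
  intro x hx
  have hx0 : x ≠ 0 := ne_of_gt hx
  have hu := hu0 x hx
  have hu1' : u₀ x - 1 ≠ 0 := sub_ne_zero.mpr (hu1 x hx)
  have ht := hτ0 x hx
  have h0 := hrel0 x hx
  have h1 := hrel1 x hx
  have hd := (hrel0' x hx).deriv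
  have hA : τ₁ x = τ₀ x + u₀ x := by linarith
  have h0' : τ₀ x = -((1 / (4 * u₀ x)) * (x * deriv u₀ x / (u₀ x - 1) - u₀ x) ^ 2 +
      x ^ 2 * u₀ x / (u₀ x - 1) ^ 2) := by linarith
  have hB : x * deriv τ₀ x = τ₀ x * (1 - u₀ x) := by
    rw [hd, h0']
    field_simp
    ring
  rw [hA, hB]
  field_simp
  ring
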